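/- Let c ∈ ℝ and ε > 0. Then there exist constants C₁, C₂ > 0 such that for all y₁, y₂ > 0, C₁ exp(−ε|y₁−y₂|²) ≤ [y₁^{−c/2} (min(1,y₁))^{c/2}] / [y₂^{−c/2} (min(1,y₂))^{c/2}] ≤ C₂ exp(ε|y₁−y₂|²). -/

import Mathlib

lemma loglip_aux {u v : ℝ} (hv : 1 ≤ v) (hvu : v ≤ u) :
    Real.log u - Real.log v ≤ u - v := by
  have hv0 : (0:ℝ) < v := lt_of_lt_of_le one_pos hv
  have hu0 : (0:ℝ) < u := lt_of_lt_of_le hv0 hvu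
  have h1 : Real.log u - Real.log v = Real.log (u / v) := (Real.log_div hu0.ne' hv0.ne').symm
  have h2 : Real.log (u / v) ≤ u / v - 1 := Real.log_le_sub_one_of_pos (div_pos hu0 hv0)
  have h3 : u / v - 1 = (u - v) / v := by field_simp
  have h4 : (u - v) / v ≤ u - v := div_le_self (sub_nonneg.2 hvu) hv
  linarith

lemma loglip {u v : ℝ} (hu : 1 ≤ u) (hv : 1 ≤ v) :
    |Real.log u - Real.log v| ≤ |u - v| := by
  rcases le_total v u with h | h
  · rw [abs_of_nonneg (sub_nonneg.2 (Real.log_le_log (lt_of_lt_of_le one_pos hv) h)),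
      abs_of_nonneg (sub_nonneg.2 h)]
    exact loglip_aux hv h
  · rw [abs_sub_comm, abs_sub_comm u v,
      abs_of_nonneg (sub_nonneg.2 (Real.log_le_log (lt_of_lt_of_le one_pos hu) h)),
      abs_of_nonneg (sub_nonneg.2 h)]
    exact loglip_aux hu h

/-- Equation (2.5): for any `ε > 0` there are `C₁, C₂ > 0` such that for all
`y₁, y₂ > 0`,
`C₁ e^{-ε|y₁-y₂|²} ≤ (y₁^{-c/2}(1∧y₁)^{c/2})/(y₂^{-c/2}(1∧y₂)^{c/2}) ≤ C₂ e^{ε|y₁-y₂|²}`. -/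
theorem stmt_5 (c ε : ℝ) (hε : 0 < ε) :
    ∃ C₁ > (0:ℝ), ∃ C₂ > (0:ℝ), ∀ y₁ y₂ : ℝ, 0 < y₁ → 0 < y₂ →
      C₁ * Real.exp (-ε * |y₁ - y₂| ^ 2) ≤
        (y₁ ^ (-c / 2) * (min 1 y₁) ^ (c / 2)) /
          (y₂ ^ (-c / 2) * (min 1 y₂) ^ (c / 2)) ∧
      (y₁ ^ (-c / 2) * (min 1 y₁) ^ (c / 2)) /
          (y₂ ^ (-c / 2) * (min 1 y₂) ^ (c / 2)) ≤
        C₂ * Real.exp (ε * |y₁ - y₂| ^ 2) := by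
  set a := c / 2 with ha
  refine ⟨Real.exp (-(a ^ 2 / (4 * ε))), Real.exp_pos _,
    Real.exp (a ^ 2 / (4 * ε)), Real.exp_pos _, ?_⟩
  intro y₁ y₂ h₁ h₂
  have key : ∀ y : ℝ, 0 < y →
      y ^ (-c / 2) * (min 1 y) ^ (c / 2) = Real.exp (-(a * Real.log (max 1 y))) := by
    intro y hy
    rcases le_total y 1 with h | h
    · rw [min_eq_right h, max_eq_left h, Real.log_one, mul_zero, neg_zero, Real.exp_zero,
        ← Real.rpow_add hy, show -c / 2 + c / 2 = 0 by ring, Real.rpow_zero]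
    · rw [min_eq_left h, max_eq_right h, Real.one_rpow, mul_one,
        Real.rpow_def_of_pos hy]
      rw [ha]
      ring_nf
  rw [key y₁ h₁, key y₂ h₂, ← Real.exp_sub]
  set L₁ := Real.log (max 1 y₁) with hL₁
  set L₂ := Real.log (max 1 y₂) with hL₂
  set t := |y₁ - y₂| with ht
  have hmax : |max 1 y₁ - max 1 y₂| ≤ t := by
    rw [ht, max_comm 1 y₁, max_comm 1 y₂]
    exact abs_max_sub_max_le_abs y₁ y₂ 1
  have hL : |L₁ - L₂| ≤ t :=
    le_trans (loglip (le_max_left 1 y₁) (le_max_left 1 y₂)) hmax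
  have habs : |(-(a * L₁)) - (-(a * L₂))| ≤ |a| * t := by
    have : (-(a * L₁)) - (-(a * L₂)) = a * (L₂ - L₁) := by ring
    rw [this, abs_mul]
    have := abs_sub_comm L₁ L₂ ▸ hL
    exact mul_le_mul_of_nonneg_left this (abs_nonneg a)
  have harith : |a| * t ≤ ε * t ^ 2 + a ^ 2 / (4 * ε) := by
    have hd : a ^ 2 / (4 * ε) * (4 * ε) = a ^ 2 := div_mul_cancel₀ _ (by positivity)
    nlinarith [sq_nonneg (2 * ε * t - |a|), sq_abs a, hd, hε, abs_nonneg a]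
  have hub : (-(a * L₁)) - (-(a * L₂)) ≤ |a| * t := le_trans (le_abs_self _) habs
  have hlb : -(|a| * t) ≤ (-(a * L₁)) - (-(a * L₂)) := neg_le_of_abs_le habs
  constructor
  · rw [← Real.exp_add]
    apply Real.exp_le_exp.2
    have : -ε * t ^ 2 ≤ ε * t ^ 2 := by nlinarith [sq_nonneg t]
    nlinarith
  · rw [← Real.exp_add]
    apply Real.exp_le_exp.2
    nlinarith
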